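/- arXiv:1304.6351 — 4 statements merged into one kernel-verified Lean document; each statement's English description precedes it below -/
import Mathlib

section
/- For any two unit vectors a, b in ℂ^d, the maximum over all density matrices ρ of ⟨a|ρ|a⟩·⟨b|ρ|b⟩ equals (1/4)·(1 + |⟨a|b⟩|)². -/
open scoped Matrix.Norms.L2Operator ComplexOrder
open Matrix


lemma vecMulVec_mulVec' {d : ℕ} (w x v : Fin d → ℂ) :
    vecMulVec w x *ᵥ v = (x ⬝ᵥ v) • w := by
  funext i
  simp only [vecMulVec_apply, mulVec, dotProduct, Pi.smul_apply, smul_eq_mul, mul_assoc,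
    Finset.mul_sum]
  rw [Finset.sum_mul]
  exact Finset.sum_congr rfl fun j _ => by ring

lemma quad_vecMulVec {d : ℕ} (w v y : Fin d → ℂ) :
    star v ⬝ᵥ (vecMulVec w (star y)) *ᵥ v = (star v ⬝ᵥ w) * (star y ⬝ᵥ v) := by
  rw [vecMulVec_mulVec', dotProduct_smul, smul_eq_mul, mul_comm]

lemma trace_mul_vecMulVec {d : ℕ} (ρ : Matrix (Fin d) (Fin d) ℂ) (w y : Fin d → ℂ) :
    (ρ * vecMulVec w (star y)).trace = star y ⬝ᵥ ρ *ᵥ w := by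
  simp only [Matrix.trace, Matrix.mul_apply, vecMulVec_apply, Matrix.diag, dotProduct, mulVec,
    Pi.star_apply, Finset.mul_sum]
  exact Finset.sum_congr rfl fun i _ => Finset.sum_congr rfl fun j _ => by ring

lemma herm_vecMulVec {d : ℕ} (w : Fin d → ℂ) : (vecMulVec w (star w)).IsHermitian := by
  ext i j
  simp [conjTranspose_apply, vecMulVec_apply, mul_comm]

lemma psd_trace_nonneg {d : ℕ} {M : Matrix (Fin d) (Fin d) ℂ} (hM : M.PosSemidef) :
    0 ≤ M.trace := by
  rw [Matrix.trace]
  apply Finset.sum_nonneg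
  intro i _
  have h := hM.dotProduct_mulVec_nonneg (Pi.single i 1)
  simpa [dotProduct, mulVec, Pi.single_apply, Finset.mul_sum] using h

lemma trace_mul_psd_nonneg {d : ℕ} {ρ N : Matrix (Fin d) (Fin d) ℂ}
    (hρ : ρ.PosSemidef) (hN : N.PosSemidef) : 0 ≤ (ρ * N).trace := by
  obtain ⟨B, rfl⟩ : ∃ B : Matrix (Fin d) (Fin d) ℂ, ρ = Bᴴ * B := by
    classical
    open scoped MatrixOrder in
    obtain ⟨X, hX, -, hXX⟩ :=
      CFC.exists_sqrt_of_isSelfAdjoint_of_quasispectrumRestricts hρ.isHermitian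
        (QuasispectrumRestricts.nnreal_of_nonneg hρ.nonneg)
    exact ⟨X, by rw [← hXX, ← star_eq_conjTranspose, hX.star_eq]⟩
  rw [← Matrix.trace_mul_cycle B N Bᴴ]
  exact psd_trace_nonneg (hN.mul_mul_conjTranspose_same B)

open scoped ComplexConjugate

lemma key_ineq {E : Type*} [NormedAddCommGroup E] [InnerProductSpace ℂ E]
    (a b v : E) (ha : ‖a‖ = 1) (hb : ‖b‖ = 1) :
    Complex.normSq (inner ℂ a v) + Complex.normSq (inner ℂ b v) ≤
      (1 + ‖(inner ℂ a b)‖) * ‖v‖ ^ 2 := by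
  set α : ℂ := inner ℂ a v with hα
  set β : ℂ := inner ℂ b v with hβ
  set t : ℝ := ‖(inner ℂ a b)‖ with ht
  set w : E := α • a + β • b with hw
  have ht0 : 0 ≤ t := norm_nonneg _
  have hwv : (inner ℂ w v : ℂ) = ((Complex.normSq α + Complex.normSq β : ℝ) : ℂ) := by
    simp [hw, inner_add_left, inner_smul_left, ← hα, ← hβ, Complex.normSq_eq_conj_mul_self]
    ring
  have hcs : ‖(inner ℂ w v)‖ ≤ ‖w‖ * ‖v‖ := by
    simpa using norm_inner_le_norm (𝕜 := ℂ) w v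
  have hwnorm : ‖w‖ ^ 2 ≤ (1 + t) * (Complex.normSq α + Complex.normSq β) := by
    have h1 : ‖w‖ ^ 2 = ‖α • a‖ ^ 2 + 2 * Complex.re (inner ℂ (α • a) (β • b)) + ‖β • b‖ ^ 2 :=
      norm_add_sq (𝕜 := ℂ) _ _
    have h2 : Complex.re (inner ℂ (α • a) (β • b) : ℂ) ≤ ‖α‖ * ‖β‖ * t := by
      calc Complex.re (inner ℂ (α • a) (β • b) : ℂ) ≤ ‖(inner ℂ (α • a) (β • b) : ℂ)‖ :=
            Complex.re_le_norm _
        _ = ‖α‖ * ‖β‖ * t := by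
            rw [inner_smul_left, inner_smul_right]
            simp [ht, _root_.map_mul]
            ring
    have h3 : ‖α • a‖ ^ 2 = Complex.normSq α := by
      rw [norm_smul, ha]
      simp [Complex.sq_norm]
    have h4 : ‖β • b‖ ^ 2 = Complex.normSq β := by
      rw [norm_smul, hb]
      simp [Complex.sq_norm]
    have h5 : 2 * (‖α‖ * ‖β‖) ≤ Complex.normSq α + Complex.normSq β := by
      have := sq_nonneg (‖α‖ - ‖β‖)
      rw [← Complex.sq_norm, ← Complex.sq_norm]
      nlinarith
    rw [h1, h3, h4]
    nlinarith [norm_nonneg α, norm_nonneg β]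
  have habs : ‖(inner ℂ w v)‖ = Complex.normSq α + Complex.normSq β := by
    rw [hwv]
    rw [Complex.norm_of_nonneg (add_nonneg (Complex.normSq_nonneg _) (Complex.normSq_nonneg _))]
  by_cases h0 : Complex.normSq α + Complex.normSq β = 0
  · rw [h0]
    have := mul_nonneg (by linarith : (0:ℝ) ≤ 1 + t) (sq_nonneg ‖v‖)
    linarith
  · have hpos : 0 < Complex.normSq α + Complex.normSq β :=
      lt_of_le_of_ne (add_nonneg (Complex.normSq_nonneg _) (Complex.normSq_nonneg _))
        (Ne.symm h0)
    have := hcs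
    rw [habs] at this
    nlinarith [norm_nonneg v, norm_nonneg w, sq_nonneg (‖w‖ - ‖v‖), mul_self_nonneg ‖v‖]

lemma dot_eq_inner {d : ℕ} (x y : Fin d → ℂ) :
    star x ⬝ᵥ y = (inner ℂ ((WithLp.equiv 2 (Fin d → ℂ)).symm x)
      ((WithLp.equiv 2 (Fin d → ℂ)).symm y) : ℂ) := by
  simp [PiLp.inner_apply, dotProduct, RCLike.inner_apply]
  exact Finset.sum_congr rfl fun _ _ => mul_comm _ _

lemma dot_self_eq_re {d : ℕ} (v : Fin d → ℂ) :
    star v ⬝ᵥ v = (((star v ⬝ᵥ v).re : ℝ) : ℂ) := by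
  have h : star v ⬝ᵥ v = ((∑ i, Complex.normSq (v i) : ℝ) : ℂ) := by
    push_cast
    simp [dotProduct, ← Complex.normSq_eq_conj_mul_self]
  rw [h]
  norm_num

lemma norm_one_of_inner_one {E : Type*} [NormedAddCommGroup E] [InnerProductSpace ℂ E] (a : E)
    (h1 : (inner ℂ a a : ℂ) = 1) : ‖a‖ = 1 := by
  rw [inner_self_eq_norm_sq_to_K] at h1
  norm_cast at h1
  rw [show (1 : ℂ) = ((1:ℝ) : ℂ) by norm_num] at h1
  have h2 := RCLike.ofReal_injective (K := ℂ) h1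
  norm_num at h2
  rcases h2 with h | h
  · exact h
  · nlinarith [norm_nonneg a]

lemma dot_key {d : ℕ} (a b v : Fin d → ℂ)
    (ha : star a ⬝ᵥ a = 1) (hb : star b ⬝ᵥ b = 1) :
    Complex.normSq (star a ⬝ᵥ v) + Complex.normSq (star b ⬝ᵥ v) ≤
      (1 + ‖star a ⬝ᵥ b‖) * (star v ⬝ᵥ v).re := by
  set a' := (WithLp.equiv 2 (Fin d → ℂ)).symm a
  set b' := (WithLp.equiv 2 (Fin d → ℂ)).symm b
  set v' := (WithLp.equiv 2 (Fin d → ℂ)).symm v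
  have ha' : ‖a'‖ = 1 :=
    norm_one_of_inner_one a' (by rw [← dot_eq_inner]; exact ha)
  have hb' : ‖b'‖ = 1 :=
    norm_one_of_inner_one b' (by rw [← dot_eq_inner]; exact hb)
  have hv : (star v ⬝ᵥ v).re = ‖v'‖ ^ 2 := by
    have h1 : (inner ℂ v' v' : ℂ) = ((‖v'‖ ^ 2 : ℝ) : ℂ) := by
      rw [inner_self_eq_norm_sq_to_K]; norm_cast
    rw [← dot_eq_inner] at h1
    rw [h1, Complex.ofReal_re]
  rw [hv, dot_eq_inner a v, dot_eq_inner b v, dot_eq_inner a b]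
  exact key_ineq a' b' v' ha' hb'

lemma N_psd {d : ℕ} (a b : Fin d → ℂ)
    (ha : star a ⬝ᵥ a = 1) (hb : star b ⬝ᵥ b = 1) :
    (((1 + ‖star a ⬝ᵥ b‖ : ℝ) : ℂ) • (1 : Matrix (Fin d) (Fin d) ℂ)
      - vecMulVec a (star a) - vecMulVec b (star b)).PosSemidef := by
  refine Matrix.PosSemidef.of_dotProduct_mulVec_nonneg ?_ ?_
  · unfold Matrix.IsHermitian
    rw [conjTranspose_sub, conjTranspose_sub, conjTranspose_smul, conjTranspose_one,
      herm_vecMulVec a, herm_vecMulVec b]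
    norm_num
  · intro v
    rw [sub_mulVec, sub_mulVec, dotProduct_sub, dotProduct_sub, smul_mulVec, one_mulVec,
      dotProduct_smul, quad_vecMulVec, quad_vecMulVec,
      star_dotProduct v a, star_dotProduct v b]
    have h1 : star (star a ⬝ᵥ v) * (star a ⬝ᵥ v) = ((Complex.normSq (star a ⬝ᵥ v) : ℝ) : ℂ) := by
      rw [Complex.normSq_eq_conj_mul_self]; rfl
    have h2 : star (star b ⬝ᵥ v) * (star b ⬝ᵥ v) = ((Complex.normSq (star b ⬝ᵥ v) : ℝ) : ℂ) := by
      rw [Complex.normSq_eq_conj_mul_self]; rfl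
    rw [h1, h2, smul_eq_mul, dot_self_eq_re v]
    have key := dot_key a b v ha hb
    have : ((1 + ‖star a ⬝ᵥ b‖ : ℝ) : ℂ) * (((star v ⬝ᵥ v).re : ℝ) : ℂ)
        - ((Complex.normSq (star a ⬝ᵥ v) : ℝ) : ℂ) - ((Complex.normSq (star b ⬝ᵥ v) : ℝ) : ℂ)
        = (((1 + ‖star a ⬝ᵥ b‖) * (star v ⬝ᵥ v).re
            - Complex.normSq (star a ⬝ᵥ v) - Complex.normSq (star b ⬝ᵥ v) : ℝ) : ℂ) := by
      push_cast; ring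
    rw [this]
    rw [Complex.zero_le_real]
    linarith

lemma psd_smul_vecMulVec {d : ℕ} (w : Fin d → ℂ) {s : ℝ} (hs : 0 ≤ s) :
    (((s : ℝ) : ℂ) • vecMulVec w (star w)).PosSemidef := by
  refine Matrix.PosSemidef.of_dotProduct_mulVec_nonneg ?_ ?_
  · unfold Matrix.IsHermitian
    rw [conjTranspose_smul, herm_vecMulVec]
    simp
  · intro v
    rw [smul_mulVec, dotProduct_smul, smul_eq_mul, quad_vecMulVec, star_dotProduct v w]
    have h1 : star (star w ⬝ᵥ v) * (star w ⬝ᵥ v) = ((Complex.normSq (star w ⬝ᵥ v) : ℝ) : ℂ) := by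
      rw [Complex.normSq_eq_conj_mul_self]; rfl
    rw [h1, ← Complex.ofReal_mul, Complex.zero_le_real]
    exact mul_nonneg hs (Complex.normSq_nonneg _)

lemma trace_vecMulVec {d : ℕ} (w y : Fin d → ℂ) :
    (vecMulVec w (star y)).trace = star y ⬝ᵥ w := by
  simp [Matrix.trace, Matrix.diag, vecMulVec_apply, dotProduct, mul_comm]

open scoped Matrix.Norms.L2Operator


/-- For any two unit vectors `a, b` in `ℂ^d`, the maximum over all
density matrices `ρ` of `⟨a|ρ|a⟩·⟨b|ρ|b⟩` equals `(1/4)·(1 + |⟨a|b⟩|)²`. -/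
theorem stmt_1 (d : ℕ) (a b : Fin d → ℂ)
    (ha : star a ⬝ᵥ a = 1) (hb : star b ⬝ᵥ b = 1) :
    IsGreatest {x : ℝ | ∃ ρ : Matrix (Fin d) (Fin d) ℂ,
        ρ.PosSemidef ∧ ρ.trace = 1 ∧
        x = (star a ⬝ᵥ ρ.mulVec a).re * (star b ⬝ᵥ ρ.mulVec b).re}
      ((1 / 4) * (1 + ‖star a ⬝ᵥ b‖) ^ 2) := by
  set c : ℂ := star a ⬝ᵥ b with hc
  set t : ℝ := ‖c‖ with htdef
  have ht0 : 0 ≤ t := norm_nonneg _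
  have htne : (1 : ℝ) + t ≠ 0 := by linarith
  constructor
  · -- membership
    set γ : ℂ := if c = 0 then 1 else (starRingEnd ℂ) c / (t : ℂ) with hγ
    have hccc : (starRingEnd ℂ) c * c = ((t : ℂ)) ^ 2 := by
      rw [mul_comm, Complex.mul_conj, htdef, Complex.normSq_eq_norm_sq]
      push_cast
      ring
    have hγc : γ * c = (t : ℂ) := by
      by_cases h : c = 0
      · simp [hγ, h, htdef]
      · have htc : (t : ℂ) ≠ 0 := by
          simp only [htdef, ne_eq, Complex.ofReal_eq_zero]
          exact fun h' => h (norm_eq_zero.mp h')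
        rw [hγ, if_neg h]
        field_simp
        rw [hccc]
    have hγt : γ * (t : ℂ) = (starRingEnd ℂ) c := by
      by_cases h : c = 0
      · simp [hγ, h, htdef]
      · have htc : (t : ℂ) ≠ 0 := by
          simp only [htdef, ne_eq, Complex.ofReal_eq_zero]
          exact fun h' => h (norm_eq_zero.mp h')
        rw [hγ, if_neg h]
        field_simp
    have hγnorm : (starRingEnd ℂ) γ * γ = 1 := by
      by_cases h : c = 0
      · simp [hγ, h]
      · have htc : (t : ℂ) ≠ 0 := by
          simp only [htdef, ne_eq, Complex.ofReal_eq_zero]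
          exact fun h' => h (norm_eq_zero.mp h')
        rw [hγ, if_neg h]
        rw [map_div₀, Complex.conj_conj, Complex.conj_ofReal]
        field_simp
        rw [mul_comm c _, hccc]
    set w : Fin d → ℂ := a + γ • b with hw
    have hada : star a ⬝ᵥ w = 1 + (t : ℂ) := by
      rw [hw, dotProduct_add, ha, dotProduct_smul, ← hc, smul_eq_mul, hγc]
    have hbdb : star b ⬝ᵥ w = γ * (1 + (t : ℂ)) := by
      rw [hw, dotProduct_add, dotProduct_smul, hb, smul_eq_mul, mul_one]
      have h1 : star b ⬝ᵥ a = (starRingEnd ℂ) c := by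
        rw [star_dotProduct, ← hc]; rfl
      rw [h1, ← hγt]; ring
    have hsw : star w = star a + (starRingEnd ℂ) γ • star b := by
      funext i
      simp [hw, Pi.star_apply, star_add, mul_comm]
    have hww : star w ⬝ᵥ w = ((2 + 2 * t : ℝ) : ℂ) := by
      rw [hsw, add_dotProduct, smul_dotProduct, hada, hbdb]
      push_cast
      rw [show (starRingEnd ℂ) γ • (γ * (1 + (t:ℂ))) = ((starRingEnd ℂ) γ * γ) * (1 + (t:ℂ)) by
        rw [smul_eq_mul]; ring, hγnorm]
      ring
    have h2t : (0:ℝ) < 2 + 2 * t := by linarith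
    refine ⟨(((2 + 2 * t : ℝ)⁻¹ : ℝ) : ℂ) • vecMulVec w (star w),
      psd_smul_vecMulVec w (le_of_lt (inv_pos.mpr h2t)), ?_, ?_⟩
    · rw [Matrix.trace_smul, _root_.trace_vecMulVec, hww, smul_eq_mul, ← Complex.ofReal_mul,
        inv_mul_cancel₀ (ne_of_gt h2t), Complex.ofReal_one]
    · have hva : star a ⬝ᵥ ((((2 + 2 * t : ℝ)⁻¹ : ℝ) : ℂ) • vecMulVec w (star w)) *ᵥ a
          = (((2 + 2*t)⁻¹ * (1+t)^2 : ℝ) : ℂ) := by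
        rw [smul_mulVec, dotProduct_smul, smul_eq_mul, quad_vecMulVec, hada,
          star_dotProduct w a, hada]
        rw [show star (1 + (t:ℂ)) = 1 + (t:ℂ) by
          rw [Complex.star_def, map_add, _root_.map_one, Complex.conj_ofReal]]
        push_cast
        ring
      have hvb : star b ⬝ᵥ ((((2 + 2 * t : ℝ)⁻¹ : ℝ) : ℂ) • vecMulVec w (star w)) *ᵥ b
          = (((2 + 2*t)⁻¹ * (1+t)^2 : ℝ) : ℂ) := by
        rw [smul_mulVec, dotProduct_smul, smul_eq_mul, quad_vecMulVec, hbdb,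
          star_dotProduct w b, hbdb]
        rw [show (star (γ * (1 + (t:ℂ))) : ℂ) = (starRingEnd ℂ) γ * (starRingEnd ℂ) (1 + (t:ℂ)) by
          rw [Complex.star_def, _root_.map_mul]]
        rw [show γ * (1 + (t:ℂ)) * ((starRingEnd ℂ) γ * (starRingEnd ℂ) (1 + (t:ℂ)))
            = ((starRingEnd ℂ) γ * γ) * ((1 + (t:ℂ)) * (starRingEnd ℂ) (1 + (t:ℂ))) by ring, hγnorm]
        rw [show (starRingEnd ℂ) (1 + (t:ℂ)) = 1 + (t:ℂ) by
          rw [map_add, _root_.map_one, Complex.conj_ofReal]]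
        push_cast
        ring
      rw [hva, hvb, Complex.ofReal_re]
      have : (2 + 2*t)⁻¹ * (1+t)^2 = (1+t)/2 := by
        field_simp
      rw [this]
      ring
  · -- upper bound
    rintro x ⟨ρ, hρ, htr, rfl⟩
    have hxa := hρ.dotProduct_mulVec_nonneg a
    have hxb := hρ.dotProduct_mulVec_nonneg b
    have hxa' : 0 ≤ (star a ⬝ᵥ ρ *ᵥ a).re := by
      rw [Complex.le_def] at hxa
      simpa using hxa.1
    have hxb' : 0 ≤ (star b ⬝ᵥ ρ *ᵥ b).re := by
      rw [Complex.le_def] at hxb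
      simpa using hxb.1
    have hT := trace_mul_psd_nonneg hρ (N_psd a b ha hb)
    have hTr : (ρ * (((1 + t : ℝ) : ℂ) • (1 : Matrix (Fin d) (Fin d) ℂ)
        - vecMulVec a (star a) - vecMulVec b (star b))).trace
        = ((1 + t : ℝ) : ℂ) - star a ⬝ᵥ ρ *ᵥ a - star b ⬝ᵥ ρ *ᵥ b := by
      rw [Matrix.mul_sub, Matrix.mul_sub, Matrix.trace_sub, Matrix.trace_sub,
        Matrix.mul_smul, Matrix.mul_one, Matrix.trace_smul, htr,
        trace_mul_vecMulVec, trace_mul_vecMulVec]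
      simp
    rw [hTr, Complex.le_def] at hT
    have hsum : (star a ⬝ᵥ ρ *ᵥ a).re + (star b ⬝ᵥ ρ *ᵥ b).re ≤ 1 + t := by
      have := hT.1
      simp [Complex.sub_re, Complex.ofReal_re] at this
      linarith
    nlinarith [sq_nonneg ((star a ⬝ᵥ ρ *ᵥ a).re - (star b ⬝ᵥ ρ *ᵥ b).re)]
end

section
/- If A and B are orthogonal projections on ℂ^d with ‖A+B‖_∞ = 1, then AB = BA = 0. -/
open scoped Matrix.Norms.L2Operator ComplexOrder
open Matrix

lemma aux_mulVec_zero {d : ℕ} {M : Matrix (Fin d) (Fin d) ℂ}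
    (h : ∀ x : Fin d → ℂ, M *ᵥ x = 0) : M = 0 := by
  ext i j
  have := congrFun (h (Pi.single j 1)) i
  simpa [mulVec_single] using this

/-- If `A` and `B` are orthogonal projections on `ℂ^d` with
`‖A+B‖_∞ = 1`, then `AB = BA = 0`. -/
theorem stmt_4 (d : ℕ) (A B : Matrix (Fin d) (Fin d) ℂ)
    (hA : A.IsHermitian) (hA2 : A * A = A)
    (hB : B.IsHermitian) (hB2 : B * B = B)
    (hnorm : ‖A + B‖ = 1) :
    A * B = 0 ∧ B * A = 0 := by
  have hBpsd : B.PosSemidef := by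
    have : B = Bᴴ * B := by rw [hB.eq, hB2]
    rw [this]; exact posSemidef_conjTranspose_mul_self B
  have hBA : B * A = 0 := by
    apply aux_mulVec_zero
    intro x
    set y : Fin d → ℂ := A *ᵥ x with hy
    have hAy : A *ᵥ y = y := by
      rw [hy, mulVec_mulVec, hA2]
    -- Euclidean space version of y
    set Y : EuclideanSpace ℂ (Fin d) := (WithLp.equiv 2 _).symm y with hY
    -- the positive quantity
    set c : ℂ := star y ⬝ᵥ (B *ᵥ y) with hc
    have hc0 : 0 ≤ c := hBpsd.dotProduct_mulVec_nonneg y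
    -- inner product computation
    have hsum : star y ⬝ᵥ ((A + B) *ᵥ y) = (‖Y‖ : ℂ) ^ 2 + c := by
      have h1 : star y ⬝ᵥ (A *ᵥ y) = (‖Y‖ : ℂ) ^ 2 := by
        rw [hAy]
        have := @inner_self_eq_norm_sq_to_K ℂ _ _ _ _ Y
        rw [EuclideanSpace.inner_eq_star_dotProduct] at this
        rw [dotProduct_comm]; simpa [hY] using this
      rw [add_mulVec, dotProduct_add, h1]
    -- Cauchy-Schwarz bound
    have hbound : ((star y ⬝ᵥ ((A + B) *ᵥ y)).re : ℝ) ≤ ‖Y‖ ^ 2 := by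
      have hinner : (inner ℂ Y ((WithLp.equiv 2 _).symm ((A + B) *ᵥ y)) : ℂ)
          = star y ⬝ᵥ ((A + B) *ᵥ y) := by
        rw [EuclideanSpace.inner_eq_star_dotProduct, dotProduct_comm]; rfl
      have h2 : ‖(inner ℂ Y ((WithLp.equiv 2 _).symm ((A + B) *ᵥ y)) : ℂ)‖
          ≤ ‖Y‖ * (‖A + B‖ * ‖Y‖) := by
        refine le_trans (norm_inner_le_norm _ _) ?_
        gcongr
        exact (A + B).l2_opNorm_mulVec Y
      rw [hinner, hnorm, one_mul] at h2
      calc ((star y ⬝ᵥ ((A + B) *ᵥ y)).re : ℝ)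
          ≤ ‖star y ⬝ᵥ ((A + B) *ᵥ y)‖ := by
            exact Complex.re_le_norm _
        _ ≤ ‖Y‖ * ‖Y‖ := h2
        _ = ‖Y‖ ^ 2 := (sq ‖Y‖).symm
    rw [hsum] at hbound
    have hcre : c.re ≤ 0 := by
      have hre : ((‖Y‖ : ℂ) ^ 2 + c).re = ‖Y‖ ^ 2 + c.re := by
        simp [← Complex.ofReal_pow]
      rw [hre] at hbound
      linarith
    have hcz : c = 0 := by
      rw [Complex.le_def] at hc0
      have h1 : (0:ℝ) ≤ c.re := by simpa using hc0.1
      have h2 : c.im = 0 := by simpa using hc0.2.symm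
      apply Complex.ext
      · simp only [Complex.zero_re]; linarith
      · simp [h2]
    have hBy : B *ᵥ y = 0 :=
      (hBpsd.dotProduct_mulVec_zero_iff y).mp (by rw [← hc]; exact hcz)
    rw [← mulVec_mulVec, hBy]
  refine ⟨?_, hBA⟩
  have : (B * A)ᴴ = A * B := by rw [conjTranspose_mul, hA.eq, hB.eq]
  rw [← this, hBA, conjTranspose_zero]
end

section
/- For a rank-one projection |a⟩⟨a| and an orthogonal projection P on ℂ^d, ‖ |a⟩⟨a| + P ‖_∞ = 1 + ‖P a‖ whenever a is not in the range of P, and equals 2 if a is in the range of P. -/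
open scoped Matrix.Norms.L2Operator ComplexOrder
open Matrix

local notation "⟪" x ", " y "⟫" => @inner ℂ _ _ x y

lemma EuclideanSpace_inner_piLp_equiv_symm {d : ℕ} (x y : Fin d → ℂ) :
    ⟪(WithLp.equiv 2 (Fin d → ℂ)).symm x, (WithLp.equiv 2 (Fin d → ℂ)).symm y⟫ = star x ⬝ᵥ y := by
  rw [dotProduct_comm]; rfl

lemma toEuclideanCLM_piLp_equiv_symm' {d : ℕ} (A : Matrix (Fin d) (Fin d) ℂ) (x : Fin d → ℂ) :
    toEuclideanCLM (𝕜 := ℂ) A ((WithLp.equiv 2 (Fin d → ℂ)).symm x)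
      = (WithLp.equiv 2 (Fin d → ℂ)).symm (Matrix.toLin' A x) := rfl

lemma WithLp_equiv_symm_smul' {d : ℕ} (c : ℂ) (x : Fin d → ℂ) :
    (WithLp.equiv 2 (Fin d → ℂ)).symm (c • x) = c • (WithLp.equiv 2 (Fin d → ℂ)).symm x := rfl

lemma key_ineq_s10 {t s α β : ℝ} (hst : s^2 = 1 - t^2) (ht : 0 ≤ t) :
    (t*α + s*β)^2 + 2*(t*α)*(t*α + s*β) + α^2 ≤ (1+t)^2 * (α^2 + β^2) := by
  have h1 : (1+t) * ((1+t)^2*(α^2+β^2) - ((t*α+s*β)^2 + 2*(t*α)*(t*α+s*β) + α^2))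
      = 2*t*(s*α-(1+t)*β)^2 := by
    linear_combination (-(1+t)*β^2 - 2*t*α^2) * hst
  nlinarith [h1, mul_nonneg ht (sq_nonneg (s*α-(1+t)*β))]

lemma key_op {E : Type*} [NormedAddCommGroup E] [InnerProductSpace ℂ E]
    (p : E →L[ℂ] E) (hsym : ∀ x y : E, ⟪p x, y⟫ = ⟪x, p y⟫)
    (hidem : ∀ x : E, p (p x) = p x) (a : E) (ha : ‖a‖ = 1) :
    ‖(innerSL ℂ a).smulRight a + p‖ = 1 + ‖p a‖ := by
  have hT : ∀ x : E, ((innerSL ℂ a).smulRight a + p) x = ⟪a, x⟫ • a + p x := fun x => rfl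
  set T : E →L[ℂ] E := (innerSL ℂ a).smulRight a + p with hTdef
  set b : E := p a with hbdef
  set t : ℝ := ‖b‖ with htdef
  have ht : 0 ≤ t := norm_nonneg _
  have hpb : p b = b := hidem a
  have hab : ⟪a, b⟫ = (t:ℂ)^2 := by
    have h1 : ⟪b, b⟫ = ⟪a, b⟫ := by
      conv_lhs => rw [hbdef]
      rw [hsym a b, hpb]
    rw [← h1, inner_self_eq_norm_sq_to_K]
    norm_num
    rfl
  have habre : RCLike.re ⟪a, b⟫ = t^2 := by rw [hab]; norm_cast
  set s : ℝ := ‖a - b‖ with hsdef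
  have hs : 0 ≤ s := norm_nonneg _
  have hs2 : s^2 = 1 - t^2 := by
    rw [hsdef, @norm_sub_sq ℂ E _ _ _ a b, habre, ha]
    ring
  -- upper bound
  have upper : ∀ x : E, ‖T x‖ ≤ (1 + t) * ‖x‖ := by
    intro x
    set u : E := p x with hudef
    set v : E := x - p x with hvdef
    have hx : x = u + v := by rw [hudef, hvdef]; abel
    have hpv : p v = 0 := by rw [hvdef, _root_.map_sub, hidem]; abel
    have e1 : ⟪u, x⟫ = ⟪x, u⟫ := hsym x x
    have e2 : ⟪u, u⟫ = ⟪x, u⟫ := by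
      rw [hudef]; rw [hsym x (p x), hidem]
    have huv : ⟪u, v⟫ = 0 := by
      rw [hvdef]
      rw [inner_sub_right, e1, e2, sub_self]
    have hbv : ⟪b, v⟫ = 0 := by
      rw [hbdef, hsym a v, hpv, inner_zero_right]
    have hau : ⟪a, u⟫ = ⟪b, u⟫ := by
      have : ⟪b, u⟫ = ⟪a, p u⟫ := by rw [hbdef]; exact hsym a u
      rw [this, hudef, hidem]
    set α : ℝ := ‖u‖ with hαdef
    set β : ℝ := ‖v‖ with hβdef
    have hx2 : ‖x‖^2 = α^2 + β^2 := by
      rw [hx, @norm_add_sq ℂ E _ _ _ u v, huv]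
      simp
      rfl
    have hcsplit : ⟪a, x⟫ = ⟪b, u⟫ + ⟪a - b, v⟫ := by
      conv_lhs => rw [hx]
      rw [inner_add_right, hau, inner_sub_left, hbv]
      ring
    have hbu : ‖⟪b, u⟫‖ ≤ t * α := by
      simpa using norm_inner_le_norm (𝕜 := ℂ) b u
    have habv : ‖⟪a - b, v⟫‖ ≤ s * β := by
      exact norm_inner_le_norm (𝕜 := ℂ) (a - b) v
    have hc : ‖⟪a, x⟫‖ ≤ t * α + s * β := by
      rw [hcsplit]
      exact (norm_add_le _ _).trans (add_le_add hbu habv)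
    -- ‖T x‖² expansion
    have hTx2 : ‖T x‖^2 = ‖⟪a, x⟫‖^2 + 2 * RCLike.re (⟪a, x⟫ * starRingEnd ℂ ⟪a, u⟫) + α^2 := by
      rw [hT, @norm_add_sq ℂ E _ _ _ (⟪a, x⟫ • a) u]
      rw [inner_smul_left, norm_smul, ha]
      have : starRingEnd ℂ ⟪a, x⟫ * ⟪a, u⟫ = starRingEnd ℂ (⟪a, x⟫ * starRingEnd ℂ ⟪a, u⟫) := by
        rw [_root_.map_mul, RingHomInvPair.comp_apply_eq]
      rw [this, RCLike.conj_re]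
      simp [mul_one]
      rfl
    have hre : RCLike.re (⟪a, x⟫ * starRingEnd ℂ ⟪a, u⟫) ≤ (t*α + s*β) * (t*α) := by
      calc RCLike.re (⟪a, x⟫ * starRingEnd ℂ ⟪a, u⟫) ≤ ‖⟪a, x⟫ * starRingEnd ℂ ⟪a, u⟫‖ :=
            RCLike.re_le_norm _
        _ = ‖⟪a, x⟫‖ * ‖⟪a, u⟫‖ := by rw [norm_mul, RCLike.norm_conj]
        _ ≤ (t*α + s*β) * (t*α) := by
            apply mul_le_mul hc _ (norm_nonneg _) (by positivity)
            rw [hau]; exact hbu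
    have hfin : ‖T x‖^2 ≤ ((1+t) * ‖x‖)^2 := by
      have h1 : ‖⟪a, x⟫‖^2 ≤ (t*α + s*β)^2 :=
        pow_le_pow_left₀ (norm_nonneg _) hc 2
      have h2 := key_ineq_s10 (α := α) (β := β) hs2 ht
      calc ‖T x‖^2
          = ‖⟪a, x⟫‖^2 + 2 * RCLike.re (⟪a, x⟫ * starRingEnd ℂ ⟪a, u⟫) + α^2 := hTx2
        _ ≤ (t*α + s*β)^2 + 2*((t*α + s*β) * (t*α)) + α^2 := by linarith
        _ = (t*α + s*β)^2 + 2*(t*α)*(t*α + s*β) + α^2 := by ring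
        _ ≤ (1+t)^2 * (α^2 + β^2) := h2
        _ = ((1+t) * ‖x‖)^2 := by rw [mul_pow, hx2]
    have h0 : (0:ℝ) ≤ (1+t) * ‖x‖ := by positivity
    have := Real.sqrt_le_sqrt hfin
    rwa [Real.sqrt_sq (norm_nonneg _), Real.sqrt_sq h0] at this
  -- lower bound
  have lower : 1 + t ≤ ‖T‖ := by
    rcases eq_or_lt_of_le ht with h0 | h0
    · -- t = 0, b = 0
      have hb0 : b = 0 := by
        rw [← norm_eq_zero, ← htdef, ← h0]
      have hTa : T a = a := by
        rw [hT, inner_self_eq_norm_sq_to_K, ha, ← hbdef, hb0]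
        simp
      have := T.le_opNorm a
      rw [hTa, ha] at this
      simpa [← h0] using this
    · set x₀ : E := (t:ℂ) • a + b with hx₀def
      have hax₀ : ⟪a, x₀⟫ = (t:ℂ) + (t:ℂ)^2 := by
        rw [hx₀def, inner_add_right, inner_smul_right, inner_self_eq_norm_sq_to_K, ha, hab]
        push_cast
        ring
      have hpx₀ : p x₀ = (t:ℂ) • b + b := by
        rw [hx₀def, _root_.map_add, _root_.map_smul, hpb, ← hbdef]
      have hTx₀ : T x₀ = ((1:ℂ) + t) • x₀ := by
        rw [hT, hax₀, hpx₀, hx₀def]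
        module
      have hx₀norm : ‖x₀‖^2 = 2*t^2 + 2*t^3 := by
        rw [hx₀def, @norm_add_sq ℂ E _ _ _ ((t:ℂ) • a) b, inner_smul_left, hab,
          norm_smul, ha]
        have : RCLike.re (starRingEnd ℂ (t:ℂ) * (t:ℂ)^2) = t^3 := by
          have e : starRingEnd ℂ (t:ℂ) * (t:ℂ)^2 = ((t^3 : ℝ) : ℂ) := by
            rw [Complex.conj_ofReal]; push_cast; ring
          rw [e, RCLike.re_to_complex, Complex.ofReal_re]
        rw [this]
        simp [← htdef]
        ring
      have hx₀pos : 0 < ‖x₀‖ := by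
        have h2 : 0 < ‖x₀‖^2 := by rw [hx₀norm]; nlinarith [h0]
        nlinarith [norm_nonneg x₀, h2]
      have := T.le_opNorm x₀
      rw [hTx₀, norm_smul] at this
      have hnorm1t : ‖(1:ℂ) + (t:ℂ)‖ = 1 + t := by
        rw [show (1:ℂ) + (t:ℂ) = ((1+t : ℝ) : ℂ) by push_cast; ring, Complex.norm_real,
          Real.norm_of_nonneg (by linarith)]
      rw [hnorm1t] at this
      exact le_of_mul_le_mul_right this hx₀pos
  refine le_antisymm (T.opNorm_le_bound (by positivity) upper) lower


/-- For a rank-one projection `|a⟩⟨a|` and an orthogonal projection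
`P` on `ℂ^d`, `‖ |a⟩⟨a| + P ‖_∞ = 1 + ‖Pa‖` whenever `a` is not in the range of `P`,
and equals `2` if `a` is in the range of `P`. -/
theorem stmt_10 (d : ℕ) (a : Fin d → ℂ) (ha : star a ⬝ᵥ a = 1)
    (P : Matrix (Fin d) (Fin d) ℂ)
    (hP : P.IsHermitian) (hP2 : P * P = P) :
    (P.mulVec a ≠ a →
      ‖vecMulVec a (star a) + P‖ =
        1 + Real.sqrt ((star (P.mulVec a) ⬝ᵥ P.mulVec a).re)) ∧
    (P.mulVec a = a → ‖vecMulVec a (star a) + P‖ = 2) := by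
  set aE : EuclideanSpace ℂ (Fin d) := (WithLp.equiv 2 _).symm a with haEdef
  set pc : EuclideanSpace ℂ (Fin d) →L[ℂ] EuclideanSpace ℂ (Fin d) :=
    toEuclideanCLM (𝕜 := ℂ) P with hpcdef
  have haE1 : ‖aE‖ = 1 := by
    have h2 : RCLike.re ⟪aE, aE⟫ = ‖aE‖^2 := inner_self_eq_norm_sq (𝕜 := ℂ) aE
    rw [haEdef, EuclideanSpace_inner_piLp_equiv_symm, ha] at h2
    simp only [RCLike.one_re] at h2
    nlinarith [norm_nonneg aE]
  have hsa : _root_.IsSelfAdjoint pc := by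
    rw [hpcdef]
    show star _ = _
    rw [← map_star, Matrix.star_eq_conjTranspose, hP]
  have hadj : ContinuousLinearMap.adjoint pc = pc :=
    ContinuousLinearMap.isSelfAdjoint_iff'.mp hsa
  have hsym : ∀ x y : EuclideanSpace ℂ (Fin d), ⟪pc x, y⟫ = ⟪x, pc y⟫ := by
    intro x y
    conv_lhs => rw [← hadj]
    exact ContinuousLinearMap.adjoint_inner_left pc y x
  have hmul : pc * pc = pc := by rw [hpcdef, ← _root_.map_mul, hP2]
  have hidem : ∀ x : EuclideanSpace ℂ (Fin d), pc (pc x) = pc x := by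
    intro x
    have : (pc * pc) x = pc x := by rw [hmul]
    exact this
  have hPaE : pc aE = (WithLp.equiv 2 _).symm (P *ᵥ a) := by
    rw [hpcdef, haEdef, toEuclideanCLM_piLp_equiv_symm', Matrix.toLin'_apply]
  have hQ : toEuclideanCLM (𝕜 := ℂ) (vecMulVec a (star a)) = (innerSL ℂ aE).smulRight aE := by
    refine ContinuousLinearMap.ext fun x => ?_
    obtain ⟨y, rfl⟩ : ∃ y : Fin d → ℂ, (WithLp.equiv 2 _).symm y = x :=
      ⟨WithLp.equiv 2 _ x, rfl⟩
    rw [toEuclideanCLM_piLp_equiv_symm', Matrix.toLin'_apply]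
    have hmv : vecMulVec a (star a) *ᵥ y = (star a ⬝ᵥ y) • a := by
      funext i
      simp only [Matrix.mulVec, dotProduct, Matrix.vecMulVec_apply, Pi.smul_apply,
        smul_eq_mul, Finset.sum_mul]
      exact Finset.sum_congr rfl fun j _ => by ring
    rw [hmv, ContinuousLinearMap.smulRight_apply, innerSL_apply_apply, haEdef,
      EuclideanSpace_inner_piLp_equiv_symm, WithLp_equiv_symm_smul']
  have hnorm : ‖vecMulVec a (star a) + P‖ = 1 + ‖pc aE‖ := by
    rw [Matrix.cstar_norm_def, _root_.map_add, hQ, ← hpcdef]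
    exact key_op pc hsym hidem aE haE1
  constructor
  · intro _
    rw [hnorm]
    congr 1
    rw [hPaE, @norm_eq_sqrt_re_inner ℂ, EuclideanSpace_inner_piLp_equiv_symm]
    rfl
  · intro h
    rw [hnorm, hPaE, h, ← haEdef, haE1]
    norm_num
end

section
/- Let {a_m}, {b_n} be orthonormal bases of ℂ^d with maximum overlap c = max_{m,n}|⟨a_m|b_n⟩|, and for a density matrix ρ let p, q be the induced probability vectors. Then the largest entry of p⊗q satisfies max_{m,n} p_m q_n ≤ (1/4)(1+c)², and taking Φ = H_∞ (min-entropy) this yields H_∞(p) + H_∞(q) ≥ −2 log₂((1+c)/2). -/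
open scoped Matrix.Norms.L2Operator ComplexOrder
open Matrix

/-- The min-entropy `H_∞(v) = −log₂ max_i v_i` of a probability vector. -/
noncomputable def minEntropy {ι : Type*} [Fintype ι] (v : ι → ℝ) : ℝ :=
  -Real.logb 2 (⨆ i, v i)


lemma dot_self_re {d : ℕ} (x : Fin d → ℂ) :
    (star x ⬝ᵥ x).re = ∑ i, Complex.normSq (x i) := by
  simp [dotProduct, Complex.re_sum, Complex.normSq_apply, Complex.mul_re]

lemma dot_self_re_nonneg {d : ℕ} (x : Fin d → ℂ) : 0 ≤ (star x ⬝ᵥ x).re := by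
  rw [dot_self_re]
  exact Finset.sum_nonneg fun i _ => Complex.normSq_nonneg _

lemma key {d : ℕ} (a b r : Fin d → ℂ) (ha : star a ⬝ᵥ a = 1) (hb : star b ⬝ᵥ b = 1) :
    Complex.normSq (star a ⬝ᵥ r) + Complex.normSq (star b ⬝ᵥ r)
      ≤ (1 + ‖star a ⬝ᵥ b‖) * (star r ⬝ᵥ r).re := by
  set α := star a ⬝ᵥ r with hα
  set β := star b ⬝ᵥ r with hβ
  set t := star a ⬝ᵥ b with ht
  set c' := ‖t‖ with hc'
  set s := Complex.normSq α + Complex.normSq β with hs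
  have hc0 : 0 ≤ c' := norm_nonneg t
  set w : Fin d → ℂ := α • a + β • b with hw
  have hba : star b ⬝ᵥ a = star t := by rw [ht, star_dotProduct]
  have hwr : star w ⬝ᵥ r = (s : ℂ) := by
    simp [hw, star_add, star_smul, add_dotProduct, smul_dotProduct, ← hα, ← hβ, hs,
      smul_eq_mul, Complex.star_def, Complex.ofReal_add, ← Complex.normSq_eq_conj_mul_self]
  have hrw : (star r ⬝ᵥ w).re = s := by
    rw [star_dotProduct, hwr]
    simp
  have hww : (star w ⬝ᵥ w).re ≤ s * (1 + c') := by
    have expand : star w ⬝ᵥ w =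
        (Complex.normSq α + Complex.normSq β : ℝ) +
          ((starRingEnd ℂ) α * β * t + (starRingEnd ℂ) ((starRingEnd ℂ) α * β * t)) := by
      simp [hw, star_add, star_smul, add_dotProduct, smul_dotProduct, dotProduct_add,
        dotProduct_smul, ha, hb, ← ht, hba, smul_eq_mul, Complex.star_def,
        ← Complex.normSq_eq_conj_mul_self, Complex.mul_conj, _root_.map_mul, Complex.conj_conj]
      linear_combination Complex.mul_conj α + Complex.mul_conj β
    rw [expand]
    have h1 : ((starRingEnd ℂ) α * β * t).re ≤ ‖α‖ * ‖β‖ * c' := by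
      calc ((starRingEnd ℂ) α * β * t).re ≤ ‖(starRingEnd ℂ) α * β * t‖ :=
            Complex.re_le_norm _
        _ = ‖α‖ * ‖β‖ * c' := by simp [norm_mul, hc']
    have h2 : 2 * ‖α‖ * ‖β‖ ≤ Complex.normSq α + Complex.normSq β := by
      have := two_mul_le_add_sq ‖α‖ ‖β‖
      simpa [Complex.sq_norm] using this
    have := Complex.add_re ((Complex.normSq α + Complex.normSq β : ℝ) : ℂ)
      ((starRingEnd ℂ) α * β * t + (starRingEnd ℂ) ((starRingEnd ℂ) α * β * t))
    rw [this]
    simp only [Complex.ofReal_re, Complex.add_re, Complex.conj_re]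
    nlinarith [norm_nonneg α, norm_nonneg β]
  -- Cauchy-Schwarz style argument
  have hpos : (0:ℝ) ≤ (star (((1 + c' : ℝ) : ℂ) • r - w) ⬝ᵥ (((1 + c' : ℝ) : ℂ) • r - w)).re :=
    dot_self_re_nonneg _
  have expand2 : (star (((1 + c' : ℝ) : ℂ) • r - w) ⬝ᵥ (((1 + c' : ℝ) : ℂ) • r - w)).re
      = (1 + c')^2 * (star r ⬝ᵥ r).re - 2 * (1 + c') * s + (star w ⬝ᵥ w).re := by
    simp only [star_sub, star_smul, sub_dotProduct, dotProduct_sub, smul_dotProduct,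
      dotProduct_smul, smul_eq_mul, Complex.star_def, Complex.conj_ofReal]
    rw [hwr]
    simp only [Complex.sub_re, Complex.add_re, Complex.mul_re, Complex.ofReal_re,
      Complex.ofReal_im]
    have : ((star r ⬝ᵥ w)).re = s := hrw
    have him : ((s : ℂ)).im = 0 := by simp
    simp [Complex.sub_re, hrw, Complex.ofReal_re]
    ring_nf
  have h := expand2 ▸ hpos
  nlinarith [h, hww, hc0]

lemma quad_form {d : ℕ} (B : Matrix (Fin d) (Fin d) ℂ) (v : Fin d → ℂ) :
    star v ⬝ᵥ (Bᴴ * B) *ᵥ v = star (B *ᵥ v) ⬝ᵥ (B *ᵥ v) := by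
  rw [← mulVec_mulVec, dotProduct_mulVec, ← star_mulVec]

lemma quad_re {d : ℕ} (B : Matrix (Fin d) (Fin d) ℂ) (v : Fin d → ℂ) :
    (star v ⬝ᵥ (Bᴴ * B) *ᵥ v).re = ∑ i, Complex.normSq (star v ⬝ᵥ star (B i)) := by
  rw [quad_form, dot_self_re]
  refine Finset.sum_congr rfl fun i _ => ?_
  have h1 : star v ⬝ᵥ star (B i) = star (B i ⬝ᵥ v) := by
    rw [star_dotProduct, star_star]
  have h2 : (B *ᵥ v) i = B i ⬝ᵥ v := rfl
  rw [h1, h2]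
  simp [Complex.normSq_apply]

lemma trace_re {d : ℕ} (B : Matrix (Fin d) (Fin d) ℂ) :
    ((Bᴴ * B).trace).re = ∑ i, (star (star (B i)) ⬝ᵥ star (B i)).re := by
  simp only [Matrix.trace, Matrix.mul_apply, Matrix.diag, Matrix.conjTranspose_apply,
    Complex.re_sum, dot_self_re]
  rw [Finset.sum_comm]
  refine Finset.sum_congr rfl fun i _ => Finset.sum_congr rfl fun j _ => ?_
  simp [Complex.normSq_conj, Complex.normSq_eq_conj_mul_self, Complex.mul_re, Complex.normSq_apply]

lemma sum_bound {d : ℕ} (B : Matrix (Fin d) (Fin d) ℂ) (a b : Fin d → ℂ)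
    (ha : star a ⬝ᵥ a = 1) (hb : star b ⬝ᵥ b = 1) :
    (star a ⬝ᵥ (Bᴴ * B) *ᵥ a).re + (star b ⬝ᵥ (Bᴴ * B) *ᵥ b).re
      ≤ (1 + ‖star a ⬝ᵥ b‖) * ((Bᴴ * B).trace).re := by
  rw [quad_re, quad_re, trace_re, ← Finset.sum_add_distrib, Finset.mul_sum]
  exact Finset.sum_le_sum fun i _ => key a b (star (B i)) ha hb

lemma sum_diag {d : ℕ} (a : Fin d → (Fin d → ℂ)) (ρ : Matrix (Fin d) (Fin d) ℂ)
    (ha : ∀ m m', star (a m) ⬝ᵥ a m' = if m = m' then 1 else 0) :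
    ∑ m, star (a m) ⬝ᵥ ρ *ᵥ a m = ρ.trace := by
  classical
  set M : Matrix (Fin d) (Fin d) ℂ := Matrix.of fun m j => (starRingEnd ℂ) (a m j) with hM
  have hMM : M * Mᴴ = 1 := by
    ext m m'
    have := ha m m'
    simp only [dotProduct, Pi.star_apply, RCLike.star_def] at this
    simp [hM, Matrix.mul_apply, Matrix.conjTranspose_apply, Matrix.one_apply, this]
  have hMM' : Mᴴ * M = 1 := mul_eq_one_comm.mp hMM
  have htr : (M * ρ * Mᴴ).trace = ρ.trace := by
    rw [Matrix.trace_mul_cycle, hMM', one_mul]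
  rw [← htr]
  rw [Matrix.trace]
  refine Finset.sum_congr rfl fun m _ => ?_
  simp only [Matrix.diag, Matrix.mul_apply, Matrix.conjTranspose_apply, hM, Matrix.of_apply,
    dotProduct, Matrix.mulVec, Pi.star_apply, RCLike.star_def, Complex.conj_conj,
    Finset.sum_mul, Finset.mul_sum]
  rw [Finset.sum_comm]
  exact Finset.sum_congr rfl fun j _ => Finset.sum_congr rfl fun k _ => by ring

/-- Let `{a m}`, `{b n}` be orthonormal bases of `ℂ^d` with maximum
overlap `c`, and let `p, q` be the probability vectors induced by a density matrix
`ρ`.  Then every entry of `p⊗q` is at most `(1/4)(1+c)²`, and consequently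
`H_∞(p) + H_∞(q) ≥ −2 log₂((1+c)/2)` (the Maassen–Uffink bound for min-entropy). -/
theorem stmt_19 (d : ℕ) (hd : 0 < d) (a b : Fin d → (Fin d → ℂ))
    (ha : ∀ m m', star (a m) ⬝ᵥ a m' = if m = m' then 1 else 0)
    (hb : ∀ n n', star (b n) ⬝ᵥ b n' = if n = n' then 1 else 0)
    (c : ℝ) (hc : IsGreatest {x : ℝ | ∃ m n, x = ‖star (a m) ⬝ᵥ b n‖} c)
    (ρ : Matrix (Fin d) (Fin d) ℂ) (hρ : ρ.PosSemidef) (hρ1 : ρ.trace = 1) :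
    (∀ m n, (star (a m) ⬝ᵥ ρ.mulVec (a m)).re * (star (b n) ⬝ᵥ ρ.mulVec (b n)).re ≤
        (1 / 4) * (1 + c) ^ 2) ∧
    minEntropy (fun m => (star (a m) ⬝ᵥ ρ.mulVec (a m)).re) +
        minEntropy (fun n => (star (b n) ⬝ᵥ ρ.mulVec (b n)).re) ≥
      -2 * Real.logb 2 ((1 + c) / 2) := by
  have : Nonempty (Fin d) := ⟨⟨0, hd⟩⟩
  obtain ⟨B, hB⟩ := (by
    open scoped MatrixOrder in
    exact CStarAlgebra.nonneg_iff_eq_star_mul_self.mp hρ.nonneg : ∃ B : Matrix (Fin d) (Fin d) ℂ, ρ = Bᴴ * B)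
  set p : Fin d → ℝ := fun m => (star (a m) ⬝ᵥ ρ.mulVec (a m)).re with hp
  set q : Fin d → ℝ := fun n => (star (b n) ⬝ᵥ ρ.mulVec (b n)).re with hq
  have hau : ∀ m, star (a m) ⬝ᵥ a m = 1 := fun m => by simpa using ha m m
  have hbu : ∀ n, star (b n) ⬝ᵥ b n = 1 := fun n => by simpa using hb n n
  have hcle : ∀ m n, ‖star (a m) ⬝ᵥ b n‖ ≤ c := fun m n => hc.2 ⟨m, n, rfl⟩
  have hc0 : 0 ≤ c := by
    obtain ⟨m, n, hx⟩ := hc.1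
    rw [hx]; positivity
  have hkey : ∀ m n, p m + q n ≤ 1 + c := by
    intro m n
    have h := sum_bound B (a m) (b n) (hau m) (hbu n)
    rw [← hB, hρ1] at h
    simp only [Complex.one_re, mul_one] at h
    have := hcle m n
    simp only [hp, hq]
    calc (star (a m) ⬝ᵥ ρ.mulVec (a m)).re + (star (b n) ⬝ᵥ ρ.mulVec (b n)).re
        ≤ 1 + ‖star (a m) ⬝ᵥ b n‖ := h
      _ ≤ 1 + c := by linarith
  have hpn : ∀ m, 0 ≤ p m := by
    intro m
    simp only [hp, hB, quad_form]
    exact dot_self_re_nonneg _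
  have hqn : ∀ n, 0 ≤ q n := by
    intro n
    simp only [hq, hB, quad_form]
    exact dot_self_re_nonneg _
  have part1 : ∀ m n, p m * q n ≤ (1 / 4) * (1 + c) ^ 2 := by
    intro m n
    nlinarith [hkey m n, hpn m, hqn n, sq_nonneg (p m - q n)]
  refine ⟨part1, ?_⟩
  have hsump : ∑ m, p m = 1 := by
    have h := sum_diag a ρ ha
    have := congrArg Complex.re h
    rw [hρ1] at this
    simpa [hp, Complex.re_sum] using this
  have hsumq : ∑ n, q n = 1 := by
    have h := sum_diag b ρ hb
    have := congrArg Complex.re h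
    rw [hρ1] at this
    simpa [hq, Complex.re_sum] using this
  obtain ⟨m0, hm0⟩ : ∃ m0, p m0 = ⨆ m, p m := exists_eq_ciSup_of_finite
  obtain ⟨n0, hn0⟩ : ∃ n0, q n0 = ⨆ n, q n := exists_eq_ciSup_of_finite
  set sp := ⨆ m, p m with hsp
  set sq := ⨆ n, q n with hsq
  have hubp : ∀ m, p m ≤ sp := fun m => le_ciSup (Set.Finite.bddAbove (Set.finite_range p)) m
  have hubq : ∀ n, q n ≤ sq := fun n => le_ciSup (Set.Finite.bddAbove (Set.finite_range q)) n
  have hsppos : 0 < sp := by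
    by_contra h
    push_neg at h
    have : ∑ m, p m ≤ 0 :=
      Finset.sum_nonpos fun m _ => le_trans (hubp m) h
    linarith [hsump ▸ this]
  have hsqpos : 0 < sq := by
    by_contra h
    push_neg at h
    have : ∑ n, q n ≤ 0 :=
      Finset.sum_nonpos fun n _ => le_trans (hubq n) h
    linarith [hsumq ▸ this]
  have hprod : sp * sq ≤ ((1 + c) / 2) ^ 2 := by
    have := part1 m0 n0
    rw [hm0, hn0] at this
    calc sp * sq ≤ (1 / 4) * (1 + c) ^ 2 := this
      _ = ((1 + c) / 2) ^ 2 := by ring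
  have hlog : Real.logb 2 (sp * sq) ≤ 2 * Real.logb 2 ((1 + c) / 2) := by
    calc Real.logb 2 (sp * sq) ≤ Real.logb 2 (((1 + c) / 2) ^ 2) :=
          Real.logb_le_logb_of_le one_lt_two (by positivity) hprod
      _ = 2 * Real.logb 2 ((1 + c) / 2) := by
          rw [Real.logb_pow]; norm_num
  have hmul : Real.logb 2 sp + Real.logb 2 sq = Real.logb 2 (sp * sq) :=
    (Real.logb_mul (ne_of_gt hsppos) (ne_of_gt hsqpos)).symm
  simp only [minEntropy, ge_iff_le, ← hsp, ← hsq]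
  linarith [hmul, hlog]
end
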